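/- For θ > 0 and c0 > c1 > 0, the identity (1/J(s))·(1 + d_a/(s − s_a) + d_b/(s − s_b)) = 1/(s·J′(s)) holds for every s ∈ ℂ ∖ [−1, 0] with s ∉ {s_a, s_b} and J(s) ≠ 0. (Equivalently, writing z = J(s) and s = I_k(z) for an inverse branch of J, this is the identity 1/z + (d_a/z)·1/(I_k(z) − s_a) + (d_b/z)·1/(I_k(z) − s_b) = I_k′(z)/I_k(z).) -/

import Mathlib

set_option maxHeartbeats 1000000

/-- The complex map `J(s; c0, c1) = (c1*s + c0) * ((s+1)/s)^(1/θ)`, analytic on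
`ℂ ∖ [−1, 0]`, using the principal branch of the complex power; this is the
branch with `J(s) = c1·s·(1 + O(1/s))` as `s → ∞`. -/
noncomputable def JmapC (θ c0 c1 : ℝ) (s : ℂ) : ℂ :=
  ((c1 : ℂ) * s + (c0 : ℂ)) * ((s + 1) / s) ^ (((1 / θ : ℝ)) : ℂ)

/-- The segment `[−1, 0]` viewed as a subset of `ℂ`. -/
def seg : Set ℂ := {z : ℂ | z.im = 0 ∧ -1 ≤ z.re ∧ z.re ≤ 0}

/-- `s_a = (1−θ)/(2θ) − (1/(2θ))·√(4θ·(c0/c1) + (1−θ)²)`. -/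
noncomputable def sA (θ r : ℝ) : ℝ :=
  (1 - θ) / (2 * θ) - 1 / (2 * θ) * Real.sqrt (4 * θ * r + (1 - θ) ^ 2)

/-- `s_b = (1−θ)/(2θ) + (1/(2θ))·√(4θ·(c0/c1) + (1−θ)²)`. -/
noncomputable def sB (θ r : ℝ) : ℝ :=
  (1 - θ) / (2 * θ) + 1 / (2 * θ) * Real.sqrt (4 * θ * r + (1 - θ) ^ 2)

/-- Auxiliary rational-function identity. -/
lemma stmt5_helper (θ c0 c1 : ℝ) (s F A B : ℂ)
    (hθ0 : (θ:ℂ) ≠ 0) (hc1' : (c1:ℂ) ≠ 0) (hs0 : s ≠ 0) (hs1 : s + 1 ≠ 0)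
    (hF : F ≠ 0) (hq : (c1:ℂ)*s + c0 ≠ 0)
    (hsA : s - A ≠ 0) (hsB : s - B ≠ 0) (hAB : B - A ≠ 0)
    (h1 : (A+B)*(θ:ℂ) = 1 - θ) (h2 : A*B*(θ:ℂ)*c1 = -c0) :
    1/(((c1:ℂ)*s+c0)*F) *
      (1 + A*(1+A)*(B*(θ:ℂ)-1)/(B-A)/(s-A) + B*(1+B)*(1-A*(θ:ℂ))/(B-A)/(s-B))
    = 1/(s * ((c1:ℂ)*F + ((c1:ℂ)*s+c0) *
        (1/(θ:ℂ) * (F/((s+1)/s)) * ((1*s-(s+1)*1)/s^2)))) := by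
  have key : s * ((c1:ℂ)*F + ((c1:ℂ)*s+c0) *
        (1/(θ:ℂ) * (F/((s+1)/s)) * ((1*s-(s+1)*1)/s^2)))
      = F * ((c1:ℂ)*θ*(s-A)*(s-B)) / ((θ:ℂ)*(s+1)) := by
    field_simp
    linear_combination ((c1:ℂ)*s) * h1 - h2
  rw [key, one_div_div]
  field_simp
  linear_combination (-(B-A)*(s+1)) * h2

/-- For `θ > 0`, `c0 > c1 > 0`, and every `s ∈ ℂ ∖ [−1, 0]` with `s ∉ {s_a, s_b}`
and `J(s) ≠ 0`:
`(1/J(s))·(1 + d_a/(s − s_a) + d_b/(s − s_b)) = 1/(s·J′(s))`, where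
`d_a = s_a(1+s_a)(s_b·θ − 1)/(s_b − s_a)` and `d_b = s_b(1+s_b)(1 − s_a·θ)/(s_b − s_a)`. -/
theorem stmt5 (θ c0 c1 : ℝ) (hθ : 0 < θ) (hc1 : 0 < c1) (hc01 : c1 < c0)
    (s : ℂ) (hs : s ∉ seg)
    (hsa : s ≠ ((sA θ (c0 / c1) : ℝ) : ℂ)) (hsb : s ≠ ((sB θ (c0 / c1) : ℝ) : ℂ))
    (hJ : JmapC θ c0 c1 s ≠ 0) :
    (1 / JmapC θ c0 c1 s) *
      (1 + ((sA θ (c0 / c1) * (1 + sA θ (c0 / c1)) * (sB θ (c0 / c1) * θ - 1) /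
              (sB θ (c0 / c1) - sA θ (c0 / c1)) : ℝ) : ℂ) / (s - ((sA θ (c0 / c1) : ℝ) : ℂ))
         + ((sB θ (c0 / c1) * (1 + sB θ (c0 / c1)) * (1 - sA θ (c0 / c1) * θ) /
              (sB θ (c0 / c1) - sA θ (c0 / c1)) : ℝ) : ℂ) / (s - ((sB θ (c0 / c1) : ℝ) : ℂ)))
      = 1 / (s * deriv (JmapC θ c0 c1) s) := by
  have hθ0 : (θ:ℂ) ≠ 0 := by exact_mod_cast hθ.ne'
  have hc1' : (c1:ℂ) ≠ 0 := by exact_mod_cast hc1.ne'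
  have hs0 : s ≠ 0 := by intro h; exact hs (by simp [seg, h])
  have hs1 : s + 1 ≠ 0 := by
    intro h
    have : s = -1 := by linear_combination h
    exact hs (by simp [seg, this])
  have hG : (s+1)/s ≠ 0 := div_ne_zero hs1 hs0
  -- the slit-plane condition for differentiating the complex power
  have hslit : 0 < ((s+1)/s).re ∨ ((s+1)/s).im ≠ 0 := by
    by_contra h
    push_neg at h
    obtain ⟨hre, him⟩ := h
    have hw : (s+1)/s = 1 + s⁻¹ := by field_simp
    rw [hw] at hre him
    simp only [Complex.add_re, Complex.add_im, Complex.one_re, Complex.one_im,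
      zero_add] at hre him
    set t : ℝ := (s⁻¹).re with ht
    have h3 : t ≤ -1 := by linarith
    have ht0 : t ≠ 0 := by intro h'; rw [h'] at h3; linarith
    have hsinv : s⁻¹ = (t : ℂ) := Complex.ext rfl (by simpa using him)
    have hseq : s = ((t⁻¹ : ℝ) : ℂ) := by
      rw [← inv_inv s, hsinv]; push_cast; ring
    have h4 : t⁻¹ * t = 1 := inv_mul_cancel₀ ht0
    apply hs
    refine ⟨by rw [hseq]; simp, ?_, ?_⟩
    · rw [hseq]; simp only [Complex.ofReal_re]; nlinarith
    · rw [hseq]; simp only [Complex.ofReal_re]; nlinarith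
  have hF : ((s+1)/s) ^ (((1/θ : ℝ)):ℂ) ≠ 0 := by
    rw [Complex.cpow_def_of_ne_zero hG]; exact Complex.exp_ne_zero _
  have hq : (c1:ℂ) * s + c0 ≠ 0 := fun h => hJ (by unfold JmapC; rw [h]; ring)
  -- Vieta facts for sA, sB
  have hc0pos : (0:ℝ) < c0 := hc1.trans hc01
  have hrad : (0:ℝ) ≤ 4 * θ * (c0/c1) + (1-θ)^2 := by
    have : (0:ℝ) < c0/c1 := div_pos hc0pos hc1
    nlinarith
  obtain ⟨D, hDdef⟩ : ∃ D : ℝ, Real.sqrt (4*θ*(c0/c1) + (1-θ)^2) = D := ⟨_, rfl⟩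
  have hD2 : D^2 = 4*θ*(c0/c1) + (1-θ)^2 := by rw [← hDdef]; exact Real.sq_sqrt hrad
  have hDpos : 0 < D := by
    rw [← hDdef]
    apply Real.sqrt_pos.mpr
    have : (0:ℝ) < c0/c1 := div_pos hc0pos hc1
    nlinarith
  have hsAe : sA θ (c0/c1) = (1-θ)/(2*θ) - 1/(2*θ)*D := by rw [sA, hDdef]
  have hsBe : sB θ (c0/c1) = (1-θ)/(2*θ) + 1/(2*θ)*D := by rw [sB, hDdef]
  have hθne : θ ≠ 0 := hθ.ne'
  have h1r : (sA θ (c0/c1) + sB θ (c0/c1)) * θ = 1 - θ := by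
    rw [hsAe, hsBe]; field_simp; ring
  have h2r : sA θ (c0/c1) * sB θ (c0/c1) * θ * c1 = -c0 := by
    rw [hsAe, hsBe]
    have hc1ne : c1 ≠ 0 := hc1.ne'
    field_simp
    have hcc : c0/c1*c1 = c0 := div_mul_cancel₀ c0 hc1ne
    linear_combination (-c1)*hD2 - 4*θ*hcc
  have h1 : (((sA θ (c0/c1) : ℝ):ℂ) + ((sB θ (c0/c1) : ℝ):ℂ)) * (θ:ℂ) = 1 - (θ:ℂ) := by
    exact_mod_cast congrArg (Complex.ofReal) h1r
  have h2 : ((sA θ (c0/c1) : ℝ):ℂ) * ((sB θ (c0/c1) : ℝ):ℂ) * (θ:ℂ) * (c1:ℂ) = -(c0:ℂ) := by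
    exact_mod_cast congrArg (Complex.ofReal) h2r
  have hABr : sA θ (c0/c1) < sB θ (c0/c1) := by
    rw [hsAe, hsBe]
    have : 0 < 1/(2*θ)*D := by positivity
    linarith
  have hAB : ((sB θ (c0/c1) : ℝ):ℂ) - ((sA θ (c0/c1) : ℝ):ℂ) ≠ 0 := by
    rw [sub_ne_zero]
    exact_mod_cast hABr.ne'
  have hsA : s - ((sA θ (c0/c1) : ℝ):ℂ) ≠ 0 := sub_ne_zero.mpr hsa
  have hsB : s - ((sB θ (c0/c1) : ℝ):ℂ) ≠ 0 := sub_ne_zero.mpr hsb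
  -- the derivative of JmapC
  have hder : HasDerivAt (JmapC θ c0 c1)
      ((c1:ℂ) * (((s+1)/s)^(((1/θ:ℝ)):ℂ)) +
        ((c1:ℂ)*s+c0) * ((((1/θ:ℝ)):ℂ) * ((s+1)/s)^((((1/θ:ℝ)):ℂ)-1) * ((1*s - (s+1)*1)/s^2))) s := by
    have h1' : HasDerivAt (fun s:ℂ => (c1:ℂ)*s + c0) c1 s := by
      simpa using ((hasDerivAt_id s).const_mul (c1:ℂ)).add_const (c0:ℂ)
    have hg : HasDerivAt (fun s:ℂ => (s+1)/s) ((1*s - (s+1)*1)/s^2) s :=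
      ((hasDerivAt_id s).add_const 1).div (hasDerivAt_id s) hs0
    unfold JmapC
    exact h1'.mul (hg.cpow_const hslit)
  rw [hder.deriv]
  have hcp : ((s+1)/s)^((((1/θ:ℝ)):ℂ)-1) = ((s+1)/s)^(((1/θ:ℝ)):ℂ) / ((s+1)/s) := by
    rw [Complex.cpow_sub _ _ hG, Complex.cpow_one]
  rw [hcp]
  unfold JmapC
  push_cast
  push_cast at hF
  exact stmt5_helper θ c0 c1 s (((s+1)/s) ^ (1/(θ:ℂ)))
    ((sA θ (c0/c1) : ℝ):ℂ) ((sB θ (c0/c1) : ℝ):ℂ)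
    hθ0 hc1' hs0 hs1 hF hq hsA hsB hAB h1 h2
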